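/- Let H be a complex Hilbert space, A ∈ B(H), and n ≥ 3 an integer such that Aⁿ = A*A. Then A is normal. -/

import Mathlib

open ContinuousLinearMap Complex

local notation "⟪" x ", " y "⟫_ℂ" => @inner ℂ _ _ x y

variable {H : Type*} [NormedAddCommGroup H] [InnerProductSpace ℂ H] [CompleteSpace H]

theorem stmt4 (A : H →L[ℂ] H) (n : ℕ) (hn : 3 ≤ n) (h : A ^ n = adjoint A * A) :
    adjoint A * A = A * adjoint A := by
  obtain ⟨m, rfl⟩ : ∃ m, n = m + 1 := ⟨n - 1, by omega⟩
  set D : H →L[ℂ] H := adjoint A * A - A * adjoint A with hDdef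
  -- ker A* ⊆ ker A
  have hker : ∀ x : H, adjoint A x = 0 → A x = 0 := by
    intro x hx
    have h1 : ⟪A x, A x⟫_ℂ = ⟪x, (adjoint A * A) x⟫_ℂ := by
      rw [ContinuousLinearMap.mul_apply, adjoint_inner_right]
    rw [← h, pow_succ'] at h1
    have h2 : ⟪x, (A * A ^ m) x⟫_ℂ = ⟪adjoint A x, (A ^ m) x⟫_ℂ := by
      rw [ContinuousLinearMap.mul_apply, ← adjoint_inner_left]
    rw [h2, hx, inner_zero_left] at h1
    exact inner_self_eq_zero.mp h1
  -- D * A = 0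
  have hc : (adjoint A * A) * A = A * (adjoint A * A) := by
    rw [← h, ← pow_succ, pow_succ']
  have hDA : D * A = 0 := by
    rw [hDdef, sub_mul, hc, mul_assoc, sub_self]
  -- D is self-adjoint (as star)
  have hstar : star D = D := by
    simp [hDdef, star_sub, star_mul, star_eq_adjoint, adjoint_adjoint]
  -- adjoint A * D = 0
  have hAdD : adjoint A * D = 0 := by
    have := congrArg star hDA
    rwa [star_mul, hstar, star_eq_adjoint, star_zero] at this
  -- A * D = 0
  have hAD : A * D = 0 := by
    ext x
    have : adjoint A (D x) = 0 := by
      have := congrFun (congrArg DFunLike.coe hAdD) x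
      simpa [mul_apply] using this
    simpa [mul_apply] using hker (D x) this
  -- D * D = 0
  have hD2 : D * D = 0 := by
    rw [hDdef]
    nth_rewrite 1 [sub_mul]
    rw [mul_assoc, mul_assoc, hAD, hAdD, mul_zero, mul_zero, sub_self]
  -- D = 0
  have hD0 : D = 0 := by
    ext x
    have hadj : adjoint D = D := by rw [← star_eq_adjoint, hstar]
    have h1 : ⟪D x, D x⟫_ℂ = ⟪x, D (D x)⟫_ℂ := by
      have := adjoint_inner_right D x (D x)
      rw [hadj] at this
      exact this.symm
    have h2 : D (D x) = 0 := by
      have := congrFun (congrArg DFunLike.coe hD2) x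
      simpa [mul_apply] using this
    rw [h2, inner_zero_right] at h1
    simpa using inner_self_eq_zero.mp h1
  exact sub_eq_zero.mp hD0
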